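/- Let (Y,d) be a compact metric space and g : Y → Y a continuous surjection satisfying Axioms 1 and 2 with constants β > 0, integer K ≥ 1 and 0 < γ < 1, and fix ε' with 0 < ε' ≤ β/2 such that d̂(x,y) ≤ ε' implies d̂(ĝ^{−n}(x), ĝ^{−n}(y)) ≤ β for n = 0, 1, …, 2K−1. If y, z ∈ Ŷ^u(x, ε') for some x ∈ Ŷ, then d̂(ĝ^{-1}(y), ĝ^{-1}(z)) ≤ γ · d̂(y, z). -/

import Mathlib

open Metric Function Topology

variable {Y : Type*} [MetricSpace Y] [CompactSpace Y]

/-- The stationary inverse limit of `g : Y → Y`. -/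
abbrev InvLim (g : Y → Y) : Type _ :=
  {y : ℕ → Y // ∀ n : ℕ, y n = g (y (n + 1))}

/-- The induced map `ĝ` on the inverse limit. -/
def ghat (g : Y → Y) (y : InvLim g) : InvLim g :=
  ⟨fun n => g (y.1 n), fun n => congrArg g (y.2 n)⟩

/-- The inverse `ĝ⁻¹` of the induced map on the inverse limit. -/
def ghatInv (g : Y → Y) (y : InvLim g) : InvLim g :=
  ⟨fun n => y.1 (n + 1), fun n => y.2 (n + 1)⟩

/-- `d'(x,y) = sup_n γ^n d(x_n, y_n)`. -/
noncomputable def dp (g : Y → Y) (γ : ℝ) (x y : InvLim g) : ℝ :=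
  ⨆ n : ℕ, γ ^ n * dist (x.1 n) (y.1 n)

/-- `d̂(x,y) = ∑_{k=0}^{K-1} γ^{-k} d'(ĝ^{-k} x, ĝ^{-k} y)`. -/
noncomputable def dhat (g : Y → Y) (γ : ℝ) (K : ℕ) (x y : InvLim g) : ℝ :=
  ∑ k ∈ Finset.range K, (γ ^ k)⁻¹ * dp g γ ((ghatInv g)^[k] x) ((ghatInv g)^[k] y)

/-- Axiom 1: `d(x,y) ≤ β` implies `d(g^K x, g^K y) ≤ γ^K d(g^{2K} x, g^{2K} y)`. -/
def axiom1 (g : Y → Y) (β : ℝ) (K : ℕ) (γ : ℝ) : Prop :=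
  ∀ x y : Y, dist x y ≤ β →
    dist (g^[K] x) (g^[K] y) ≤ γ ^ K * dist (g^[2 * K] x) (g^[2 * K] y)

/-- Axiom 2: `g^K(B(g^K x, ε)) ⊆ g^{2K}(B(x, γ ε))` for `0 < ε ≤ β`. -/
def axiom2 (g : Y → Y) (β : ℝ) (K : ℕ) (γ : ℝ) : Prop :=
  ∀ x : Y, ∀ ε : ℝ, 0 < ε → ε ≤ β →
    g^[K] '' Metric.closedBall (g^[K] x) ε ⊆ g^[2 * K] '' Metric.closedBall x (γ * ε)

/-- The local stable set `Ŷ^s(x, ε)` in the inverse limit. -/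
def Shat (g : Y → Y) (γ : ℝ) (K : ℕ) (x : InvLim g) (ε : ℝ) : Set (InvLim g) :=
  {y | ∀ n : ℕ, dhat g γ K ((ghat g)^[n] x) ((ghat g)^[n] y) ≤ ε}

/-- The local unstable set `Ŷ^u(x, ε)` in the inverse limit. -/
def Uhat (g : Y → Y) (γ : ℝ) (K : ℕ) (x : InvLim g) (ε : ℝ) : Set (InvLim g) :=
  {y | ∀ n : ℕ, dhat g γ K ((ghatInv g)^[n] x) ((ghatInv g)^[n] y) ≤ ε}

set_option linter.unusedSectionVars false

section AuxSection
variable (g : Y → Y) (γ : ℝ)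

lemma ghatInv_iter_apply (k n : ℕ) (y : InvLim g) :
    ((ghatInv g)^[k] y).1 n = y.1 (n + k) := by
  induction k generalizing y with
  | zero => rfl
  | succ k ih =>
    rw [Function.iterate_succ_apply, ih]
    rfl

lemma g_iter_shift (j n : ℕ) (y : InvLim g) : g^[j] (y.1 (n + j)) = y.1 n := by
  induction j with
  | zero => rfl
  | succ j ih =>
    rw [Function.iterate_succ_apply]
    have h : g (y.1 (n + (j + 1))) = y.1 (n + j) := (y.2 (n + j)).symm
    rw [h, ih]

lemma dp_bddAbove (hγ0 : 0 < γ) (hγ1 : γ < 1) (x y : InvLim g) :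
    BddAbove (Set.range fun n : ℕ => γ ^ n * dist (x.1 n) (y.1 n)) := by
  obtain ⟨C, hC⟩ := Metric.isBounded_iff.mp
    (isCompact_univ : IsCompact (Set.univ : Set Y)).isBounded
  refine ⟨C, ?_⟩
  rintro _ ⟨n, rfl⟩
  calc γ ^ n * dist (x.1 n) (y.1 n) ≤ 1 * dist (x.1 n) (y.1 n) :=
        mul_le_mul_of_nonneg_right (pow_le_one₀ hγ0.le hγ1.le) dist_nonneg
    _ ≤ C := by simpa using hC (Set.mem_univ (x.1 n)) (Set.mem_univ (y.1 n))

lemma le_dp (hγ0 : 0 < γ) (hγ1 : γ < 1) (x y : InvLim g) (n : ℕ) :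
    γ ^ n * dist (x.1 n) (y.1 n) ≤ dp g γ x y :=
  le_ciSup (dp_bddAbove g γ hγ0 hγ1 x y) n

lemma dist_le_dp (hγ0 : 0 < γ) (hγ1 : γ < 1) (x y : InvLim g) :
    dist (x.1 0) (y.1 0) ≤ dp g γ x y := by
  simpa using le_dp g γ hγ0 hγ1 x y 0

lemma dp_nonneg (hγ0 : 0 < γ) (hγ1 : γ < 1) (x y : InvLim g) :
    0 ≤ dp g γ x y :=
  le_trans dist_nonneg (dist_le_dp g γ hγ0 hγ1 x y)

lemma dp_symm (x y : InvLim g) : dp g γ x y = dp g γ y x := by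
  simp only [dp, dist_comm]

lemma dp_triangle (hγ0 : 0 < γ) (hγ1 : γ < 1) (x y z : InvLim g) :
    dp g γ x z ≤ dp g γ x y + dp g γ y z := by
  apply ciSup_le
  intro n
  calc γ ^ n * dist (x.1 n) (z.1 n)
      ≤ γ ^ n * (dist (x.1 n) (y.1 n) + dist (y.1 n) (z.1 n)) :=
        mul_le_mul_of_nonneg_left (dist_triangle _ _ _) (pow_nonneg hγ0.le n)
    _ = γ ^ n * dist (x.1 n) (y.1 n) + γ ^ n * dist (y.1 n) (z.1 n) := by ring
    _ ≤ dp g γ x y + dp g γ y z :=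
        add_le_add (le_dp g γ hγ0 hγ1 x y n) (le_dp g γ hγ0 hγ1 y z n)

lemma dhat_symm (K : ℕ) (x y : InvLim g) : dhat g γ K x y = dhat g γ K y x := by
  unfold dhat
  exact Finset.sum_congr rfl fun k _ => by rw [dp_symm]

lemma dhat_triangle (hγ0 : 0 < γ) (hγ1 : γ < 1) (K : ℕ) (x y z : InvLim g) :
    dhat g γ K x z ≤ dhat g γ K x y + dhat g γ K y z := by
  unfold dhat
  rw [← Finset.sum_add_distrib]
  refine Finset.sum_le_sum fun k _ => ?_
  rw [← mul_add]
  exact mul_le_mul_of_nonneg_left (dp_triangle g γ hγ0 hγ1 _ _ _)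
    (inv_nonneg.mpr (pow_nonneg hγ0.le k))

lemma dist_le_dhat (hγ0 : 0 < γ) (hγ1 : γ < 1) (K : ℕ) (hK : 1 ≤ K) (x y : InvLim g) :
    dist (x.1 0) (y.1 0) ≤ dhat g γ K x y := by
  have h0 : (γ ^ 0)⁻¹ * dp g γ ((ghatInv g)^[0] x) ((ghatInv g)^[0] y) ≤ dhat g γ K x y := by
    apply Finset.single_le_sum (f := fun k =>
      (γ ^ k)⁻¹ * dp g γ ((ghatInv g)^[k] x) ((ghatInv g)^[k] y))
    · intro k _
      exact mul_nonneg (inv_nonneg.mpr (pow_nonneg hγ0.le k)) (dp_nonneg g γ hγ0 hγ1 _ _)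
    · exact Finset.mem_range.mpr hK
  simp only [pow_zero, inv_one, one_mul, Function.iterate_zero_apply] at h0
  exact le_trans (dist_le_dp g γ hγ0 hγ1 x y) h0

lemma dp_shiftK_le (hγ0 : 0 < γ) (hγ1 : γ < 1) {β : ℝ} {K : ℕ}
    (h1 : axiom1 g β K γ) (y z : InvLim g) (hd : ∀ m, dist (y.1 m) (z.1 m) ≤ β) :
    dp g γ ((ghatInv g)^[K] y) ((ghatInv g)^[K] z) ≤ γ ^ K * dp g γ y z := by
  apply ciSup_le
  intro n
  rw [ghatInv_iter_apply, ghatInv_iter_apply]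
  have hax := h1 (y.1 (n + 2 * K)) (z.1 (n + 2 * K)) (hd _)
  rw [show n + 2 * K = n + K + K from by omega] at hax
  have e1 : g^[K] (y.1 (n + K + K)) = y.1 (n + K) := g_iter_shift g K (n + K) y
  have e2 : g^[K] (z.1 (n + K + K)) = z.1 (n + K) := g_iter_shift g K (n + K) z
  have e3 : g^[2 * K] (y.1 (n + K + K)) = y.1 n := by
    rw [show n + K + K = n + 2 * K from by omega]; exact g_iter_shift g (2 * K) n y
  have e4 : g^[2 * K] (z.1 (n + K + K)) = z.1 n := by
    rw [show n + K + K = n + 2 * K from by omega]; exact g_iter_shift g (2 * K) n z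
  rw [e1, e2, e3, e4] at hax
  calc γ ^ n * dist (y.1 (n + K)) (z.1 (n + K))
      ≤ γ ^ n * (γ ^ K * dist (y.1 n) (z.1 n)) :=
        mul_le_mul_of_nonneg_left hax (pow_nonneg hγ0.le n)
    _ = γ ^ K * (γ ^ n * dist (y.1 n) (z.1 n)) := by ring
    _ ≤ γ ^ K * dp g γ y z :=
        mul_le_mul_of_nonneg_left (le_dp g γ hγ0 hγ1 y z n) (pow_nonneg hγ0.le K)

end AuxSection

/-- Corollary 3.5: contraction on local unstable sets under the inverse map. -/
theorem stmt8 (g : Y → Y) (hgc : Continuous g) (hgs : Function.Surjective g)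
    (β γ : ℝ) (K : ℕ) (hβ : 0 < β) (hK : 1 ≤ K) (hγ0 : 0 < γ) (hγ1 : γ < 1)
    (h1 : axiom1 g β K γ) (h2 : axiom2 g β K γ)
    (ε' : ℝ) (hε'0 : 0 < ε') (hε'β : ε' ≤ β / 2)
    (hε' : ∀ x y : InvLim g, dhat g γ K x y ≤ ε' → ∀ n : ℕ, n < 2 * K →
      dhat g γ K ((ghatInv g)^[n] x) ((ghatInv g)^[n] y) ≤ β) :
    ∀ x y z : InvLim g, y ∈ Uhat g γ K x ε' → z ∈ Uhat g γ K x ε' →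
      dhat g γ K (ghatInv g y) (ghatInv g z) ≤ γ * dhat g γ K y z := by
  intro x y z hy hz
  have hd : ∀ m, dist (y.1 m) (z.1 m) ≤ β := by
    intro m
    have h1' := hy m
    have h2' := hz m
    have hyx : dhat g γ K ((ghatInv g)^[m] y) ((ghatInv g)^[m] x) ≤ ε' := by
      rw [dhat_symm]; exact h1'
    have htri := dhat_triangle g γ hγ0 hγ1 K
      ((ghatInv g)^[m] y) ((ghatInv g)^[m] x) ((ghatInv g)^[m] z)
    have hdist := dist_le_dhat g γ hγ0 hγ1 K hK ((ghatInv g)^[m] y) ((ghatInv g)^[m] z)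
    rw [ghatInv_iter_apply, ghatInv_iter_apply] at hdist
    simp only [Nat.zero_add] at hdist
    linarith
  set a : ℕ → ℝ := fun k => dp g γ ((ghatInv g)^[k] y) ((ghatInv g)^[k] z) with ha
  set f : ℕ → ℝ := fun k => (γ ^ k)⁻¹ * a k with hf
  have haK : a K ≤ γ ^ K * a 0 := by
    exact dp_shiftK_le g γ hγ0 hγ1 h1 y z hd
  have hfK : f K ≤ f 0 := by
    simp only [hf, pow_zero, inv_one, one_mul]
    calc (γ ^ K)⁻¹ * a K ≤ (γ ^ K)⁻¹ * (γ ^ K * a 0) :=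
          mul_le_mul_of_nonneg_left haK (inv_nonneg.mpr (pow_nonneg hγ0.le K))
      _ = a 0 := by
          field_simp
  have hL : dhat g γ K (ghatInv g y) (ghatInv g z) = γ * ∑ k ∈ Finset.range K, f (k + 1) := by
    unfold dhat
    rw [Finset.mul_sum]
    refine Finset.sum_congr rfl fun k _ => ?_
    rw [← Function.iterate_succ_apply, ← Function.iterate_succ_apply]
    simp only [hf, ha]
    rw [pow_succ, mul_inv]
    field_simp
  have hR : dhat g γ K y z = ∑ k ∈ Finset.range K, f k := by
    unfold dhat
    rfl
  have hS1 : ∑ k ∈ Finset.range (K + 1), f k = (∑ k ∈ Finset.range K, f k) + f K :=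
    Finset.sum_range_succ f K
  have hS2 : ∑ k ∈ Finset.range (K + 1), f k = (∑ k ∈ Finset.range K, f (k + 1)) + f 0 :=
    Finset.sum_range_succ' f K
  have hsum : ∑ k ∈ Finset.range K, f (k + 1) ≤ ∑ k ∈ Finset.range K, f k := by linarith
  rw [hL, hR]
  exact mul_le_mul_of_nonneg_left hsum hγ0.le
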